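/- Let K ⊆ ℝ² be the attractor of an IFS {φ_j(z) = r_j(z + d_j)}_{j=1}^N forming a fractal gasket: each φ_j(Δ) ⊆ Δ for the regular triangle Δ with vertices (0,0), (1,0), (1/2, √3/2), and distinct φ_i(Δ), φ_j(Δ) intersect at most at their vertices. Then K satisfies the sharp separation condition: there exists C' > 0 such that for all k ≥ 1 and words I, J ∈ Σ^k, if φ_I(K) ∩ φ_J(K) = ∅ then dist(φ_I(K), φ_J(K)) ≥ C'·min{diam φ_I(K), diam φ_J(K)}. -/

import Mathlib

open Metric RealInnerProductSpace Pointwise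

local notation "E2" => EuclideanSpace ℝ (Fin 2)

lemma sq_step (L A B : ℝ) (hA : 0 ≤ A) (hB : 0 ≤ B)
    (h : 4 * L^2 ≤ A * B ∨ L ≤ 0) : L ≤ 1/2 * (Real.sqrt A * Real.sqrt B) := by
  rcases h with h | h
  · have h2 : (2*L) ≤ Real.sqrt (A*B) := by
      rcases le_or_gt (2*L) 0 with h0 | h0
      · exact h0.trans (Real.sqrt_nonneg _)
      · rw [show A*B = Real.sqrt (A*B)^2 by rw [Real.sq_sqrt (mul_nonneg hA hB)]] at h
        nlinarith [Real.sqrt_nonneg (A*B)]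
    rw [Real.sqrt_mul hA] at h2; linarith
  · have := mul_nonneg (Real.sqrt_nonneg A) (Real.sqrt_nonneg B)
    linarith

lemma cone_end (s p1 p2 q1 q2 : ℝ) (hs : s^2 = 3) (hs0 : 0 < s)
    (key : 0 ≤ p1*q1 + p2*q2 → s * (p1*q1 + p2*q2) ≤ |p1*q2 - p2*q1|) :
    p1*q1 + p2*q2 ≤ 1/2 * (Real.sqrt (p1^2+p2^2) * Real.sqrt (q1^2+q2^2)) := by
  apply sq_step _ _ _ (by positivity) (by positivity)
  rcases le_or_gt (p1*q1 + p2*q2) 0 with h | h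
  · right; exact h
  left
  have k := key h.le
  have h1 : 0 ≤ s * (p1*q1 + p2*q2) := mul_nonneg hs0.le h.le
  have h2 := mul_self_le_mul_self h1 k
  rw [abs_mul_abs_self] at h2
  nlinarith [h2]

lemma coneOB (s p1 p2 q1 q2 : ℝ) (hs : s^2 = 3) (hs0 : 0 < s)
    (hp2 : 0 ≤ p2) (hp1 : p2 ≤ s*p1) (hq2 : 0 ≤ q2) (hq1 : q2 ≤ -(s*q1)) :
    p1*q1 + p2*q2 ≤ 1/2 * (Real.sqrt (p1^2+p2^2) * Real.sqrt (q1^2+q2^2)) := by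
  refine cone_end s p1 p2 q1 q2 hs hs0 (fun _ => le_trans ?_ (le_abs_self _))
  nlinarith [mul_nonneg (sub_nonneg.2 hp1) (sub_nonneg.2 hq1), mul_nonneg hp2 hq2,
    mul_nonneg (sub_nonneg.2 hp1) hq2, mul_nonneg hp2 (sub_nonneg.2 hq1), hs0.le]

lemma coneOA (s p1 p2 q1 q2 : ℝ) (hs : s^2 = 3) (hs0 : 0 < s)
    (hp2 : 0 ≤ p2) (hp1 : p2 ≤ s*p1) (hq1 : q2 ≤ s*q1) (hq1' : q2 ≤ -(s*q1)) :
    p1*q1 + p2*q2 ≤ 1/2 * (Real.sqrt (p1^2+p2^2) * Real.sqrt (q1^2+q2^2)) := by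
  refine cone_end s p1 p2 q1 q2 hs hs0 (fun _ => le_trans ?_ (neg_le_abs _))
  nlinarith [mul_nonneg (sub_nonneg.2 hp1) (sub_nonneg.2 hq1), mul_nonneg (sub_nonneg.2 hp1) (sub_nonneg.2 hq1'),
    mul_nonneg hp2 (sub_nonneg.2 hq1), mul_nonneg hp2 (sub_nonneg.2 hq1'), hs0.le]

lemma coneBA (s p1 p2 q1 q2 : ℝ) (hs : s^2 = 3) (hs0 : 0 < s)
    (hp2 : 0 ≤ p2) (hp1 : p2 ≤ -(s*p1)) (hq1 : q2 ≤ s*q1) (hq1' : q2 ≤ -(s*q1)) :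
    p1*q1 + p2*q2 ≤ 1/2 * (Real.sqrt (p1^2+p2^2) * Real.sqrt (q1^2+q2^2)) := by
  refine cone_end s p1 p2 q1 q2 hs hs0 (fun _ => le_trans ?_ (le_abs_self _))
  nlinarith [mul_nonneg (sub_nonneg.2 hp1) (sub_nonneg.2 hq1), mul_nonneg (sub_nonneg.2 hp1) (sub_nonneg.2 hq1'),
    mul_nonneg hp2 (sub_nonneg.2 hq1), mul_nonneg hp2 (sub_nonneg.2 hq1'), hs0.le]

-- the coordinate versions of inner and norm on ℝ²
lemma inner2 (z w : EuclideanSpace ℝ (Fin 2)) : ⟪z, w⟫ = z 0 * w 0 + z 1 * w 1 := by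
  simp [PiLp.inner_apply, Fin.sum_univ_two]; ring

lemma norm2 (z : EuclideanSpace ℝ (Fin 2)) : ‖z‖ = Real.sqrt ((z 0)^2 + (z 1)^2) := by
  rw [EuclideanSpace.norm_eq, Fin.sum_univ_two]; simp [sq_abs]

lemma sub2 (z w : EuclideanSpace ℝ (Fin 2)) (i : Fin 2) : (z - w) i = z i - w i := rfl

/-- main cone lemma: x, y in the triangle, u v distinct vertices. -/
lemma cone_main (x y u v : EuclideanSpace ℝ (Fin 2))
    (hx1 : 0 ≤ x 1) (hx2 : x 1 ≤ Real.sqrt 3 * x 0) (hx3 : x 1 ≤ Real.sqrt 3 * (1 - x 0))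
    (hy1 : 0 ≤ y 1) (hy2 : y 1 ≤ Real.sqrt 3 * y 0) (hy3 : y 1 ≤ Real.sqrt 3 * (1 - y 0))
    (hu : (u 0 = 0 ∧ u 1 = 0) ∨ (u 0 = 1 ∧ u 1 = 0) ∨ (u 0 = 1/2 ∧ u 1 = Real.sqrt 3/2))
    (hv : (v 0 = 0 ∧ v 1 = 0) ∨ (v 0 = 1 ∧ v 1 = 0) ∨ (v 0 = 1/2 ∧ v 1 = Real.sqrt 3/2))
    (huv : u ≠ v) :
    ⟪x - u, y - v⟫ ≤ 1/2 * (‖x - u‖ * ‖y - v‖) := by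
  set s := Real.sqrt 3 with hsdef
  have hs : s^2 = 3 := Real.sq_sqrt (by norm_num)
  have hs0 : 0 < s := Real.sqrt_pos.2 (by norm_num)
  have hext : ∀ z w : EuclideanSpace ℝ (Fin 2), z 0 = w 0 → z 1 = w 1 → z = w := by
    intro z w h0 h1; ext i; fin_cases i <;> assumption
  rw [inner2, norm2, norm2]
  simp only [sub2]
  rcases hu with ⟨e0, e1⟩ | ⟨e0, e1⟩ | ⟨e0, e1⟩ <;>
    rcases hv with ⟨f0, f1⟩ | ⟨f0, f1⟩ | ⟨f0, f1⟩
  · exact absurd (hext u v (by rw [e0, f0]) (by rw [e1, f1])) huv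
  · rw [e0, e1, f0, f1]
    exact coneOB s (x 0 - 0) (x 1 - 0) (y 0 - 1) (y 1 - 0) hs hs0 (by linarith) (by linarith)
      (by linarith) (by linarith)
  · rw [e0, e1, f0, f1]
    exact coneOA s (x 0 - 0) (x 1 - 0) (y 0 - 1/2) (y 1 - s/2) hs hs0 (by linarith) (by linarith)
      (by nlinarith) (by nlinarith)
  · rw [e0, e1, f0, f1]
    have := coneOB s (y 0 - 0) (y 1 - 0) (x 0 - 1) (x 1 - 0) hs hs0 (by linarith) (by linarith)
      (by linarith) (by linarith)
    linarith [this]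
  · exact absurd (hext u v (by rw [e0, f0]) (by rw [e1, f1])) huv
  · rw [e0, e1, f0, f1]
    exact coneBA s (x 0 - 1) (x 1 - 0) (y 0 - 1/2) (y 1 - s/2) hs hs0 (by linarith) (by linarith)
      (by nlinarith) (by nlinarith)
  · rw [e0, e1, f0, f1]
    have := coneOA s (y 0 - 0) (y 1 - 0) (x 0 - 1/2) (x 1 - s/2) hs hs0 (by linarith) (by linarith)
      (by nlinarith) (by nlinarith)
    linarith [this]
  · rw [e0, e1, f0, f1]
    have := coneBA s (y 0 - 1) (y 1 - 0) (x 0 - 1/2) (x 1 - s/2) hs hs0 (by linarith) (by linarith)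
      (by nlinarith) (by nlinarith)
    linarith [this]
  · exact absurd (hext u v (by rw [e0, f0]) (by rw [e1, f1])) huv


lemma ext2 (z w : E2) (h0 : z 0 = w 0) (h1 : z 1 = w 1) : z = w := by
  ext i; fin_cases i <;> assumption

lemma eval_smul_add (c : ℝ) (z w : E2) (i : Fin 2) : (c • (z + w)) i = c * (z i + w i) := by
  simp; ring

/-- convex combination from a vertex stays in the triangle -/
lemma tri_convex (x u : E2) (t : ℝ)
    (hx : 0 ≤ x 1 ∧ x 1 ≤ Real.sqrt 3 * x 0 ∧ x 1 ≤ Real.sqrt 3 * (1 - x 0))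
    (hu : 0 ≤ u 1 ∧ u 1 ≤ Real.sqrt 3 * u 0 ∧ u 1 ≤ Real.sqrt 3 * (1 - u 0))
    (ht0 : 0 ≤ t) (ht1 : t ≤ 1) :
    0 ≤ (u + t • (x - u)) 1 ∧ (u + t • (x - u)) 1 ≤ Real.sqrt 3 * (u + t • (x - u)) 0 ∧
      (u + t • (x - u)) 1 ≤ Real.sqrt 3 * (1 - (u + t • (x - u)) 0) := by
  obtain ⟨a1, a2, a3⟩ := hx
  obtain ⟨b1, b2, b3⟩ := hu
  have h0 : (u + t • (x - u)) 0 = u 0 + t * (x 0 - u 0) := by simp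
  have h1 : (u + t • (x - u)) 1 = u 1 + t * (x 1 - u 1) := by simp
  rw [h0, h1]
  refine ⟨?_, ?_, ?_⟩
  · nlinarith [mul_nonneg ht0 a1, mul_nonneg (sub_nonneg.2 ht1) b1]
  · nlinarith [mul_nonneg ht0 (sub_nonneg.2 a2), mul_nonneg (sub_nonneg.2 ht1) (sub_nonneg.2 b2)]
  · nlinarith [mul_nonneg ht0 (sub_nonneg.2 a3), mul_nonneg (sub_nonneg.2 ht1) (sub_nonneg.2 b3)]


lemma fixO (s c x0 x1 A B : ℝ) (hs0 : 0 < s) (hc : 0 < c)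
    (a1 : 0 ≤ x1) (a2 : x1 ≤ s*x0)
    (e0 : c*(x0 + A) = 0) (e1 : c*(x1 + B) = 0)
    (b1 : 0 ≤ c*(0 + B)) (b2 : c*(0 + B) ≤ s*(c*(0 + A))) :
    x0 = 0 ∧ x1 = 0 := by
  have h1 : c*x1 ≤ c*0 := by nlinarith
  have hx1 : x1 ≤ 0 := (mul_le_mul_iff_right₀ hc).mp h1
  have hx1' : x1 = 0 := le_antisymm hx1 a1
  have h2 : s*(c*x0) ≤ s*0 := by nlinarith
  have h3 : c*x0 ≤ 0 := (mul_le_mul_iff_right₀ hs0).mp h2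
  have h4 : x0 ≤ 0 := (mul_le_mul_iff_right₀ hc).mp (by linarith)
  have h5 : s*0 ≤ s*x0 := by nlinarith
  have h6 : 0 ≤ x0 := (mul_le_mul_iff_right₀ hs0).mp h5
  exact ⟨le_antisymm h4 h6, hx1'⟩

lemma fixB (s c x0 x1 A B : ℝ) (hs0 : 0 < s) (hc : 0 < c)
    (a1 : 0 ≤ x1) (a3 : x1 ≤ s*(1-x0))
    (e0 : c*(x0 + A) = 1) (e1 : c*(x1 + B) = 0)
    (b1 : 0 ≤ c*(0 + B)) (b3 : c*(0 + B) ≤ s*(1 - c*(1 + A))) :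
    x0 = 1 ∧ x1 = 0 := by
  have h1 : c*x1 ≤ c*0 := by nlinarith
  have hx1 : x1 ≤ 0 := (mul_le_mul_iff_right₀ hc).mp h1
  have hx1' : x1 = 0 := le_antisymm hx1 a1
  have h2 : s*0 ≤ s*(c*(x0-1)) := by nlinarith
  have h3 : 0 ≤ c*(x0-1) := (mul_le_mul_iff_right₀ hs0).mp h2
  have h4 : c*0 ≤ c*(x0-1) := by linarith
  have h5 : 0 ≤ x0 - 1 := (mul_le_mul_iff_right₀ hc).mp h4
  have h6 : s*0 ≤ s*(1-x0) := by nlinarith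
  have h7 : 0 ≤ 1 - x0 := (mul_le_mul_iff_right₀ hs0).mp h6
  exact ⟨by linarith, hx1'⟩

lemma fixA (s c x0 x1 A B : ℝ) (hs0 : 0 < s) (hc : 0 < c)
    (a2 : x1 ≤ s*x0) (a3 : x1 ≤ s*(1-x0))
    (e0 : c*(x0 + A) = 1/2) (e1 : c*(x1 + B) = s/2)
    (b2 : c*(s/2 + B) ≤ s*(c*(1/2 + A))) (b3 : c*(s/2 + B) ≤ s*(1 - c*(1/2 + A))) :
    x0 = 1/2 ∧ x1 = s/2 := by
  have h1 : c*(s/2) ≤ c*x1 := by nlinarith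
  have h2 : s/2 ≤ x1 := (mul_le_mul_iff_right₀ hc).mp h1
  have hx1le : x1 ≤ s/2 := by linarith
  have hx1 : x1 = s/2 := le_antisymm hx1le h2
  have h3 : s*(1/2) ≤ s*x0 := by nlinarith
  have h4 : 1/2 ≤ x0 := (mul_le_mul_iff_right₀ hs0).mp h3
  have h5 : s*x0 ≤ s*(1/2) := by nlinarith
  have h6 : x0 ≤ 1/2 := (mul_le_mul_iff_right₀ hs0).mp h5
  exact ⟨le_antisymm h6 h4, hx1⟩

/-- a vertex of Δ lying in f(Δ) is fixed by f -/
lemma vertex_fix (c : ℝ) (hc : 0 < c) (dd : E2) (f : E2 → E2)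
    (hf : ∀ z, f z = c • (z + dd))
    (Δ : Set E2)
    (hΔ : Δ = {z : E2 | 0 ≤ z 1 ∧ z 1 ≤ Real.sqrt 3 * z 0 ∧ z 1 ≤ Real.sqrt 3 * (1 - z 0)})
    (hsub : f '' Δ ⊆ Δ) (u : E2)
    (hu : (u 0 = 0 ∧ u 1 = 0) ∨ (u 0 = 1 ∧ u 1 = 0) ∨ (u 0 = 1/2 ∧ u 1 = Real.sqrt 3/2))
    (huf : u ∈ f '' Δ) : f u = u := by
  set s := Real.sqrt 3 with hsdef
  have hs : s^2 = 3 := Real.sq_sqrt (by norm_num)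
  have hs0 : 0 < s := Real.sqrt_pos.2 (by norm_num)
  obtain ⟨x, hxΔ, hfx⟩ := huf
  have e0 : c * (x 0 + dd 0) = u 0 := by rw [← hfx, hf]; simp; ring
  have e1 : c * (x 1 + dd 1) = u 1 := by rw [← hfx, hf]; simp; ring
  have huΔ : u ∈ Δ := by
    rw [hΔ]
    simp only [Set.mem_setOf_eq]
    rcases hu with ⟨g0, g1⟩ | ⟨g0, g1⟩ | ⟨g0, g1⟩ <;> simp only [g0, g1] <;>
      refine ⟨by linarith, by nlinarith, by nlinarith⟩
  have hfu : f u ∈ Δ := hsub ⟨u, huΔ, rfl⟩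
  rw [hΔ] at hfu hxΔ
  obtain ⟨a1, a2, a3⟩ := hxΔ
  obtain ⟨b1, b2, b3⟩ := hfu
  have F0 : (f u) 0 = c * (u 0 + dd 0) := by rw [hf]; simp; ring
  have F1 : (f u) 1 = c * (u 1 + dd 1) := by rw [hf]; simp; ring
  rw [F1] at b1 b2 b3
  rw [F0] at b2 b3
  suffices hxu : x = u by rw [← hxu, hfx, hxu]
  have key : x 0 = u 0 ∧ x 1 = u 1 := by
    rcases hu with ⟨g0, g1⟩ | ⟨g0, g1⟩ | ⟨g0, g1⟩ <;>
      simp only [g0, g1] at e0 e1 b1 b2 b3 <;> rw [g0, g1]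
    · exact fixO s c (x 0) (x 1) (dd 0) (dd 1) hs0 hc a1 a2 e0 e1 (by linarith) (by linarith)
    · exact fixB s c (x 0) (x 1) (dd 0) (dd 1) hs0 hc a1 a3 e0 e1 (by linarith) (by linarith)
    · exact fixA s c (x 0) (x 1) (dd 0) (dd 1) hs0 hc a2 a3 e0 e1 (by linarith) (by linarith)
  exact ext2 x u key.1 key.2

lemma maps_nested (cf cg : ℝ) (hcg : 0 < cg) (hc0 : 0 ≤ cf) (hle : cf ≤ cg) (df dg : E2)
    (f g : E2 → E2) (hfdef : ∀ z, f z = cf • (z + df)) (hgdef : ∀ z, g z = cg • (z + dg))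
    (Δ : Set E2)
    (hΔ : Δ = {z : E2 | 0 ≤ z 1 ∧ z 1 ≤ Real.sqrt 3 * z 0 ∧ z 1 ≤ Real.sqrt 3 * (1 - z 0)})
    (u : E2) (huΔ : u ∈ Δ) (heq : f u = g u) :
    f '' Δ ⊆ g '' Δ := by
  rintro _ ⟨x, hx, rfl⟩
  refine ⟨u + (cf/cg) • (x - u), ?_, ?_⟩
  · rw [hΔ]
    rw [hΔ] at hx huΔ
    exact tri_convex x u (cf/cg) hx huΔ (div_nonneg hc0 hcg.le)
      ((div_le_one hcg).2 hle)
  · rw [hgdef, hfdef] at heq ⊢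
    have hcc : cg * (cf/cg) = cf := by field_simp
    have expand : cg • (u + (cf/cg) • (x - u) + dg) = cg • (u + dg) + (cg * (cf/cg)) • (x - u) := by
      module
    rw [expand, hcc, ← heq]
    module


lemma delta_closed (Δ : Set E2)
    (hΔ : Δ = {z : E2 | 0 ≤ z 1 ∧ z 1 ≤ Real.sqrt 3 * z 0 ∧ z 1 ≤ Real.sqrt 3 * (1 - z 0)}) :
    IsClosed Δ := by
  have hc0 : Continuous fun z : E2 => z 0 := (EuclideanSpace.proj (0 : Fin 2)).continuous
  have hc1 : Continuous fun z : E2 => z 1 := (EuclideanSpace.proj (1 : Fin 2)).continuous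
  rw [hΔ]
  exact (isClosed_le continuous_const hc1).inter
    ((isClosed_le hc1 (continuous_const.mul hc0)).inter
      (isClosed_le hc1 (continuous_const.mul (continuous_const.sub hc0))))

lemma delta_box (Δ : Set E2)
    (hΔ : Δ = {z : E2 | 0 ≤ z 1 ∧ z 1 ≤ Real.sqrt 3 * z 0 ∧ z 1 ≤ Real.sqrt 3 * (1 - z 0)}) :
    ∀ z ∈ Δ, 0 ≤ z 0 ∧ z 0 ≤ 1 ∧ 0 ≤ z 1 ∧ z 1 ≤ Real.sqrt 3 := by
  have hs0 : 0 < Real.sqrt 3 := Real.sqrt_pos.2 (by norm_num)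
  intro z hz
  rw [hΔ] at hz
  obtain ⟨a1, a2, a3⟩ := hz
  have h0 : 0 ≤ z 0 := by nlinarith
  have h1 : z 0 ≤ 1 := by nlinarith
  exact ⟨h0, h1, a1, by nlinarith⟩

lemma delta_dist (Δ : Set E2)
    (hΔ : Δ = {z : E2 | 0 ≤ z 1 ∧ z 1 ≤ Real.sqrt 3 * z 0 ∧ z 1 ≤ Real.sqrt 3 * (1 - z 0)}) :
    ∀ x ∈ Δ, ∀ y ∈ Δ, dist x y ≤ 2 := by
  have hs : Real.sqrt 3 ^ 2 = 3 := Real.sq_sqrt (by norm_num)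
  intro x hx y hy
  obtain ⟨a0, a1, a2, a3⟩ := delta_box Δ hΔ x hx
  obtain ⟨b0, b1, b2, b3⟩ := delta_box Δ hΔ y hy
  rw [EuclideanSpace.dist_eq, Fin.sum_univ_two, Real.dist_eq, Real.dist_eq, sq_abs, sq_abs]
  have h4 : (x 0 - y 0)^2 + (x 1 - y 1)^2 ≤ 4 := by nlinarith
  calc Real.sqrt ((x 0 - y 0)^2 + (x 1 - y 1)^2) ≤ Real.sqrt 4 := Real.sqrt_le_sqrt h4
    _ = 2 := by rw [show (4:ℝ) = 2^2 by norm_num, Real.sqrt_sq (by norm_num)]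

lemma delta_compact (Δ : Set E2)
    (hΔ : Δ = {z : E2 | 0 ≤ z 1 ∧ z 1 ≤ Real.sqrt 3 * z 0 ∧ z 1 ≤ Real.sqrt 3 * (1 - z 0)}) :
    IsCompact Δ := by
  rw [Metric.isCompact_iff_isClosed_bounded]
  refine ⟨delta_closed Δ hΔ, ?_⟩
  have h := delta_dist Δ hΔ
  rcases Set.eq_empty_or_nonempty Δ with he | ⟨z0, hz0⟩
  · rw [he]; exact Bornology.isBounded_empty
  · exact (Metric.isBounded_iff_subset_closedBall z0).2 ⟨2, fun z hz => (h z hz z0 hz0 : _)⟩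

lemma delta_diam (Δ : Set E2)
    (hΔ : Δ = {z : E2 | 0 ≤ z 1 ∧ z 1 ≤ Real.sqrt 3 * z 0 ∧ z 1 ≤ Real.sqrt 3 * (1 - z 0)}) :
    diam Δ ≤ 2 :=
  diam_le_of_forall_dist_le (by norm_num) (delta_dist Δ hΔ)

/-- Composition of the maps of an IFS along a word:
`φ_{i₁…i_k} = φ_{i₁} ∘ ⋯ ∘ φ_{i_k}`. -/
def phiWord {N : ℕ} {E : Type*} (φ : Fin N → E → E) : List (Fin N) → E → E
  | [] => id
  | i :: I => φ i ∘ phiWord φ I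

-- (statement below is verbatim)
set_option maxHeartbeats 1000000 in
/-- a fractal gasket satisfies the sharp separation condition. -/
theorem stmt19 {N : ℕ}
    (r : Fin N → ℝ) (d : Fin N → EuclideanSpace ℝ (Fin 2))
    (hr : ∀ j, 0 < r j ∧ r j < 1)
    (φ : Fin N → EuclideanSpace ℝ (Fin 2) → EuclideanSpace ℝ (Fin 2))
    (hφ : ∀ j z, φ j z = r j • (z + d j))
    -- the regular triangle Δ with vertices (0,0), (1,0), (1/2, √3/2)
    (Δ V : Set (EuclideanSpace ℝ (Fin 2)))
    (hΔ : Δ = {z | 0 ≤ z 1 ∧ z 1 ≤ Real.sqrt 3 * z 0 ∧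
      z 1 ≤ Real.sqrt 3 * (1 - z 0)})
    (hV : V = {z | (z 0 = 0 ∧ z 1 = 0) ∨ (z 0 = 1 ∧ z 1 = 0) ∨
      (z 0 = 1 / 2 ∧ z 1 = Real.sqrt 3 / 2)})
    -- fractal gasket conditions
    (hsub : ∀ j, φ j '' Δ ⊆ Δ)
    (hvert : ∀ i j, i ≠ j →
      (φ i '' Δ) ∩ (φ j '' Δ) ⊆ (φ i '' V) ∩ (φ j '' V))
    -- the attractor K
    (K : Set (EuclideanSpace ℝ (Fin 2)))
    (hKne : K.Nonempty) (hKcomp : IsCompact K)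
    (hK : K = ⋃ j, φ j '' K) :
    -- sharp separation condition
    ∃ C' > (0 : ℝ), ∀ k : ℕ, 1 ≤ k → ∀ I J : List (Fin N),
      I.length = k → J.length = k →
      (phiWord φ I '' K) ∩ (phiWord φ J '' K) = ∅ →
      ∀ a ∈ phiWord φ I '' K, ∀ b ∈ phiWord φ J '' K,
        C' * min (Metric.diam (phiWord φ I '' K))
            (Metric.diam (phiWord φ J '' K)) ≤ dist a b := by
  classical
  have hs0 : 0 < Real.sqrt 3 := Real.sqrt_pos.2 (by norm_num)
  have hΔcl := delta_closed Δ hΔ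
  have hΔcomp := delta_compact Δ hΔ
  -- three vertices
  set P0 : EuclideanSpace ℝ (Fin 2) := !₂[0, 0] with hP0def
  set P1 : EuclideanSpace ℝ (Fin 2) := !₂[1, 0] with hP1def
  set P2 : EuclideanSpace ℝ (Fin 2) := !₂[1/2, Real.sqrt 3/2] with hP2def
  have cP0 : P0 0 = 0 ∧ P0 1 = 0 := ⟨rfl, rfl⟩
  have cP1 : P1 0 = 1 ∧ P1 1 = 0 := ⟨rfl, rfl⟩
  have cP2 : P2 0 = 1/2 ∧ P2 1 = Real.sqrt 3/2 := ⟨rfl, rfl⟩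
  have hVmem : ∀ u ∈ V, (u 0 = 0 ∧ u 1 = 0) ∨ (u 0 = 1 ∧ u 1 = 0) ∨
      (u 0 = 1/2 ∧ u 1 = Real.sqrt 3/2) := by
    intro u hu; rwa [hV] at hu
  have hVcases : ∀ u ∈ V, u = P0 ∨ u = P1 ∨ u = P2 := by
    intro u hu
    rcases hVmem u hu with ⟨h0, h1⟩ | ⟨h0, h1⟩ | ⟨h0, h1⟩
    · exact Or.inl (ext2 u P0 (by rw [h0, cP0.1]) (by rw [h1, cP0.2]))
    · exact Or.inr (Or.inl (ext2 u P1 (by rw [h0, cP1.1]) (by rw [h1, cP1.2])))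
    · exact Or.inr (Or.inr (ext2 u P2 (by rw [h0, cP2.1]) (by rw [h1, cP2.2])))
  have hVΔ : ∀ u ∈ V, u ∈ Δ := by
    intro u hu
    rw [hΔ]
    rcases hVmem u hu with ⟨h0, h1⟩ | ⟨h0, h1⟩ | ⟨h0, h1⟩ <;> rw [Set.mem_setOf_eq, h0, h1] <;>
      refine ⟨by linarith, by nlinarith, by nlinarith⟩
  have hP0Δ : P0 ∈ Δ := by
    rw [hΔ, Set.mem_setOf_eq, cP0.1, cP0.2]; exact ⟨le_refl 0, by linarith, by linarith⟩
  have hΔne : Δ.Nonempty := ⟨P0, hP0Δ⟩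
  -- map basics
  have hφeq : ∀ j, φ j = fun z => r j • (z + d j) := fun j => funext (hφ j)
  have hcont : ∀ j, Continuous (φ j) := fun j => by
    rw [hφeq j]; exact ((continuous_id (X := EuclideanSpace ℝ (Fin 2))).add continuous_const).const_smul (r j)
  have hinj : ∀ j, Function.Injective (φ j) := by
    intro j a b hab
    rw [hφ j a, hφ j b] at hab
    have h2 := smul_right_injective (EuclideanSpace ℝ (Fin 2)) (ne_of_gt (hr j).1) hab
    exact add_right_cancel h2
  have hsubvec : ∀ j (a b : EuclideanSpace ℝ (Fin 2)), φ j a - φ j b = r j • (a - b) := by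
    intro j a b; rw [hφ j a, hφ j b]; module
  have hdistj : ∀ j (a b : EuclideanSpace ℝ (Fin 2)), dist (φ j a) (φ j b) = r j * dist a b := by
    intro j a b
    rw [dist_eq_norm, dist_eq_norm, hsubvec j a b, norm_smul, Real.norm_eq_abs,
      abs_of_pos (hr j).1]
  have hdiamj : ∀ j (S : Set (EuclideanSpace ℝ (Fin 2))), diam (φ j '' S) = r j * diam S := by
    intro j S
    have h1 : φ j '' S = r j • ((fun z => z + d j) '' S) := by
      rw [hφeq j, ← Set.image_smul, Set.image_image]
    have h2 : diam ((fun z : EuclideanSpace ℝ (Fin 2) => z + d j) '' S) = diam S :=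
      (isometry_add_right (d j)).diam_image S
    rw [h1, diam_smul₀, h2, Real.norm_eq_abs, abs_of_pos (hr j).1]
  -- K inside the triangle
  have hKΔ : K ⊆ Δ := by
    have hcont' : Continuous fun x : EuclideanSpace ℝ (Fin 2) => infDist x Δ :=
      continuous_infDist_pt Δ
    obtain ⟨x₀, hx₀K, hmax'⟩ := hKcomp.exists_isMaxOn hKne hcont'.continuousOn
    have hmax : ∀ y ∈ K, infDist y Δ ≤ infDist x₀ Δ := fun y hy => hmax' hy
    have hx₀' : x₀ ∈ ⋃ j, φ j '' K := hK ▸ hx₀K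
    obtain ⟨j, hj⟩ := Set.mem_iUnion.1 hx₀'
    obtain ⟨y, hyK, hyx⟩ := hj
    have step : infDist x₀ Δ ≤ r j * infDist y Δ := by
      rw [← hyx]
      obtain ⟨z, hz, hzd⟩ := hΔcomp.exists_infDist_eq_dist hΔne y
      calc infDist (φ j y) Δ ≤ infDist (φ j y) (φ j '' Δ) :=
            infDist_le_infDist_of_subset (hsub j) (hΔne.image _)
        _ ≤ dist (φ j y) (φ j z) := infDist_le_dist_of_mem ⟨z, hz, rfl⟩
        _ = r j * dist y z := hdistj j y z
        _ = r j * infDist y Δ := by rw [← hzd]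
    have hy' : infDist y Δ ≤ infDist x₀ Δ := hmax y hyK
    have h0 : infDist x₀ Δ ≤ 0 := by
      nlinarith [(hr j).1, (hr j).2, infDist_nonneg (x := y) (s := Δ),
        mul_nonneg (hr j).1.le (sub_nonneg.2 hy')]
    intro x hxK
    have hle0 : infDist x Δ ≤ 0 := le_trans (hmax x hxK) h0
    have h00 : infDist x Δ = 0 := le_antisymm hle0 infDist_nonneg
    exact (IsClosed.mem_iff_infDist_zero hΔcl hΔne).2 h00
  -- word basics
  have hWcons : ∀ (i : Fin N) (I : List (Fin N)) (S : Set (EuclideanSpace ℝ (Fin 2))),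
      phiWord φ (i :: I) '' S = φ i '' (phiWord φ I '' S) := by
    intro i I S; show (φ i ∘ phiWord φ I) '' S = _; rw [Set.image_comp]
  have hWΔ : ∀ W : List (Fin N), phiWord φ W '' Δ ⊆ Δ := by
    intro W
    induction W with
    | nil => simp [phiWord]
    | cons j W ih => rw [hWcons]; exact (Set.image_mono ih).trans (hsub j)
  have hWK : ∀ W : List (Fin N), phiWord φ W '' K ⊆ Δ :=
    fun W => le_trans (Set.image_mono hKΔ) (hWΔ W)
  have hdiamW : ∀ W : List (Fin N), diam (phiWord φ W '' K) ≤ 2 := by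
    intro W
    induction W with
    | nil =>
      simp only [phiWord, Set.image_id]
      exact le_trans (diam_mono hKΔ hΔcomp.isBounded) (delta_diam Δ hΔ)
    | cons j W ih =>
      rw [hWcons, hdiamj]
      nlinarith [(hr j).1, (hr j).2, diam_nonneg (s := phiWord φ W '' K)]
  -- vertex fixing and uniqueness
  have hfix : ∀ (j : Fin N), ∀ u ∈ V, u ∈ φ j '' Δ → φ j u = u := fun j u hu h =>
    vertex_fix (r j) (hr j).1 (d j) (φ j) (hφ j) Δ hΔ (hsub j) u (hVmem u hu) h
  have huniq : ∀ i j, i ≠ j → ∀ u ∈ V, φ i u ≠ φ j u := by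
    have core : ∀ i j, i ≠ j → r i ≤ r j → ∀ u ∈ V, φ i u = φ j u → False := by
      intro i j hij hle u huV heq
      have hnest : φ i '' Δ ⊆ φ j '' Δ :=
        maps_nested (r i) (r j) (hr j).1 (hr i).1.le hle (d i) (d j) (φ i) (φ j)
          (hφ i) (hφ j) Δ hΔ u (hVΔ u huV) heq
      have hsubV : φ i '' Δ ⊆ φ i '' V := fun w hw => ((hvert i j hij) ⟨hw, hnest hw⟩).1
      set Pm : EuclideanSpace ℝ (Fin 2) := !₂[1/2, 0] with hPmdef
      have cPm : Pm 0 = 1/2 ∧ Pm 1 = 0 := ⟨rfl, rfl⟩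
      have hPmΔ : Pm ∈ Δ := by
        rw [hΔ, Set.mem_setOf_eq, cPm.1, cPm.2]
        exact ⟨le_refl 0, by nlinarith, by nlinarith⟩
      obtain ⟨w, hwV, hw⟩ := hsubV ⟨Pm, hPmΔ, rfl⟩
      have hwPm : w = Pm := hinj i hw
      rw [hwPm] at hwV
      rcases hVmem Pm hwV with ⟨h0, h1⟩ | ⟨h0, h1⟩ | ⟨h0, h1⟩
      · rw [cPm.1] at h0; norm_num at h0
      · rw [cPm.1] at h0; norm_num at h0
      · rw [cPm.2] at h1; nlinarith [h1.symm]
    intro i j hij u hu heq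
    rcases le_total (r i) (r j) with h | h
    · exact core i j hij h u hu heq
    · exact core j i (Ne.symm hij) h u hu heq.symm
  -- N > 0
  obtain ⟨xK, hxK⟩ := hKne
  have hxK' : xK ∈ ⋃ j, φ j '' K := hK ▸ hxK
  obtain ⟨j0, -⟩ := Set.mem_iUnion.1 hxK'
  haveI : Nonempty (Fin N) := ⟨j0⟩
  -- the finite collection of positive constants
  have hconsts : ∃ c : ℝ, 0 < c ∧
      (∀ u ∈ V, u ∉ K → ∀ a ∈ K, c ≤ dist a u) ∧
      (∀ u ∈ V, ∀ j, u ∉ φ j '' Δ → ∀ a ∈ φ j '' Δ, c ≤ dist a u) ∧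
      (∀ i j, (φ i '' Δ) ∩ (φ j '' Δ) = ∅ → ∀ a ∈ φ i '' Δ, ∀ b ∈ φ j '' Δ, c ≤ dist a b) := by
    have comp1 : ∀ u : EuclideanSpace ℝ (Fin 2), ∃ c > (0:ℝ), (u ∉ K → ∀ a ∈ K, c ≤ dist a u) := by
      intro u
      by_cases hu : u ∈ K
      · exact ⟨1, one_pos, fun h => absurd hu h⟩
      · refine ⟨infDist u K, (hKcomp.isClosed.notMem_iff_infDist_pos ⟨xK, hxK⟩).1 hu,
          fun _ a ha => ?_⟩
        rw [dist_comm]; exact infDist_le_dist_of_mem ha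
    have comp2 : ∀ u : EuclideanSpace ℝ (Fin 2), ∃ c > (0:ℝ),
        ∀ j, u ∉ φ j '' Δ → ∀ a ∈ φ j '' Δ, c ≤ dist a u := by
      intro u
      set g : Fin N → ℝ := fun j => if u ∈ φ j '' Δ then 1 else infDist u (φ j '' Δ) with hg
      refine ⟨Finset.univ.inf' Finset.univ_nonempty g, ?_, ?_⟩
      · rw [gt_iff_lt, Finset.lt_inf'_iff]
        intro j _
        by_cases h : u ∈ φ j '' Δ
        · simp only [hg, if_pos h]; exact one_pos
        · simp only [hg, if_neg h]
          exact ((hΔcomp.image (hcont j)).isClosed.notMem_iff_infDist_pos (hΔne.image _)).1 h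
      · intro j hj a ha
        have h1 : Finset.univ.inf' Finset.univ_nonempty g ≤ g j :=
          Finset.inf'_le g (Finset.mem_univ j)
        have h2 : g j = infDist u (φ j '' Δ) := if_neg hj
        have h3 : infDist u (φ j '' Δ) ≤ dist u a := infDist_le_dist_of_mem ha
        rw [dist_comm]; linarith [h1, h2 ▸ h1]
    have comp3 : ∃ c > (0:ℝ), ∀ i j, (φ i '' Δ) ∩ (φ j '' Δ) = ∅ →
        ∀ a ∈ φ i '' Δ, ∀ b ∈ φ j '' Δ, c ≤ dist a b := by
      set g : Fin N × Fin N → ℝ := fun p =>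
        if (φ p.1 '' Δ) ∩ (φ p.2 '' Δ) = ∅ then
          sInf ((fun a => infDist a (φ p.2 '' Δ)) '' (φ p.1 '' Δ)) else 1 with hg
      refine ⟨Finset.univ.inf' Finset.univ_nonempty g, ?_, ?_⟩
      · rw [gt_iff_lt, Finset.lt_inf'_iff]
        rintro ⟨i, j⟩ -
        by_cases h : (φ i '' Δ) ∩ (φ j '' Δ) = ∅
        · simp only [hg, if_pos h]
          obtain ⟨a₀, ha₀, hmin'⟩ := (hΔcomp.image (hcont i)).exists_isMinOn (hΔne.image _)
            (continuous_infDist_pt (φ j '' Δ)).continuousOn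
          have hmin : ∀ a ∈ φ i '' Δ, infDist a₀ (φ j '' Δ) ≤ infDist a (φ j '' Δ) :=
            fun a ha => hmin' ha
          have ha₀pos : 0 < infDist a₀ (φ j '' Δ) := by
            refine ((hΔcomp.image (hcont j)).isClosed.notMem_iff_infDist_pos
              (hΔne.image _)).1 ?_
            intro hmem
            have : a₀ ∈ (φ i '' Δ) ∩ (φ j '' Δ) := ⟨ha₀, hmem⟩
            rw [h] at this
            exact this
          refine lt_of_lt_of_le ha₀pos (le_csInf ((hΔne.image _).image _) ?_)
          rintro b ⟨a, ha, rfl⟩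
          exact hmin a ha
        · simp only [hg, if_neg h]; exact one_pos
      · intro i j hij a ha b hb
        have h1 : Finset.univ.inf' Finset.univ_nonempty g ≤ g (i, j) :=
          Finset.inf'_le g (Finset.mem_univ _)
        have h2 : g (i, j) = sInf ((fun a => infDist a (φ j '' Δ)) '' (φ i '' Δ)) := if_pos hij
        have h3 : sInf ((fun a => infDist a (φ j '' Δ)) '' (φ i '' Δ)) ≤ infDist a (φ j '' Δ) := by
          refine csInf_le ⟨0, ?_⟩ ⟨a, ha, rfl⟩
          rintro t ⟨w, -, rfl⟩
          exact infDist_nonneg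
        have h4 : infDist a (φ j '' Δ) ≤ dist a b := infDist_le_dist_of_mem hb
        linarith [h2 ▸ h1]
    obtain ⟨cA, hcA, hA⟩ := comp3
    obtain ⟨k0, hk0, hK0⟩ := comp1 P0
    obtain ⟨k1, hk1, hK1⟩ := comp1 P1
    obtain ⟨k2, hk2, hK2⟩ := comp1 P2
    obtain ⟨t0, ht0, hT0⟩ := comp2 P0
    obtain ⟨t1, ht1, hT1⟩ := comp2 P1
    obtain ⟨t2, ht2, hT2⟩ := comp2 P2
    have hcpos : (0:ℝ) < min cA (min k0 (min k1 (min k2 (min t0 (min t1 t2))))) :=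
      lt_min hcA (lt_min hk0 (lt_min hk1 (lt_min hk2 (lt_min ht0 (lt_min ht1 ht2)))))
    have l1 : min cA (min k0 (min k1 (min k2 (min t0 (min t1 t2))))) ≤ cA := min_le_left _ _
    have l2 : min cA (min k0 (min k1 (min k2 (min t0 (min t1 t2))))) ≤ k0 :=
      (min_le_right _ _).trans (min_le_left _ _)
    have l3 : min cA (min k0 (min k1 (min k2 (min t0 (min t1 t2))))) ≤ k1 :=
      (min_le_right _ _).trans ((min_le_right _ _).trans (min_le_left _ _))
    have l4 : min cA (min k0 (min k1 (min k2 (min t0 (min t1 t2))))) ≤ k2 :=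
      (min_le_right _ _).trans ((min_le_right _ _).trans ((min_le_right _ _).trans
        (min_le_left _ _)))
    have l5 : min cA (min k0 (min k1 (min k2 (min t0 (min t1 t2))))) ≤ t0 :=
      (min_le_right _ _).trans ((min_le_right _ _).trans ((min_le_right _ _).trans
        ((min_le_right _ _).trans (min_le_left _ _))))
    have l6 : min cA (min k0 (min k1 (min k2 (min t0 (min t1 t2))))) ≤ t1 :=
      (min_le_right _ _).trans ((min_le_right _ _).trans ((min_le_right _ _).trans
        ((min_le_right _ _).trans ((min_le_right _ _).trans (min_le_left _ _)))))
    have l7 : min cA (min k0 (min k1 (min k2 (min t0 (min t1 t2))))) ≤ t2 :=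
      (min_le_right _ _).trans ((min_le_right _ _).trans ((min_le_right _ _).trans
        ((min_le_right _ _).trans ((min_le_right _ _).trans (min_le_right _ _)))))
    refine ⟨min cA (min k0 (min k1 (min k2 (min t0 (min t1 t2))))), hcpos, ?_, ?_, ?_⟩
    · intro u huV hnot a ha
      rcases hVcases u huV with rfl | rfl | rfl
      · exact l2.trans (hK0 hnot a ha)
      · exact l3.trans (hK1 hnot a ha)
      · exact l4.trans (hK2 hnot a ha)
    · intro u huV j hj a ha
      rcases hVcases u huV with rfl | rfl | rfl
      · exact l5.trans (hT0 j hj a ha)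
      · exact l6.trans (hT1 j hj a ha)
      · exact l7.trans (hT2 j hj a ha)
    · intro i j hij a ha b hb
      exact l1.trans (hA i j hij a ha b hb)
  obtain ⟨c, hc, hcK, hcT, hcS⟩ := hconsts
  -- Lemma L : separation from an avoided vertex
  have hL : ∀ W : List (Fin N), ∀ u ∈ V, u ∉ phiWord φ W '' K →
      ∀ a ∈ phiWord φ W '' K, c/2 * diam (phiWord φ W '' K) ≤ dist a u := by
    intro W
    induction W with
    | nil =>
      intro u huV hnot a ha
      simp only [phiWord, Set.image_id] at hnot ha ⊢
      have h1 := hcK u huV hnot a ha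
      have h2 : diam K ≤ 2 := le_trans (diam_mono hKΔ hΔcomp.isBounded) (delta_diam Δ hΔ)
      nlinarith [hc]
    | cons j W ih =>
      intro u huV hnot a ha
      rw [hWcons] at hnot ha ⊢
      obtain ⟨a', ha', rfl⟩ := ha
      by_cases hu : u ∈ φ j '' Δ
      · have hfixu : φ j u = u := hfix j u huV hu
        have hnot' : u ∉ phiWord φ W '' K := fun hmem => hnot ⟨u, hmem, hfixu⟩
        have step := ih u huV hnot' a' ha'
        rw [hdiamj]
        have hde : dist (φ j a') u = r j * dist a' u := by
          conv_lhs => rw [← hfixu]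
          exact hdistj j a' u
        rw [hde]
        have hmul := mul_le_mul_of_nonneg_left step (hr j).1.le
        linarith [hmul]
      · have haΔ : φ j a' ∈ φ j '' Δ := ⟨a', hWK W ha', rfl⟩
        have h1 := hcT u huV j hu (φ j a') haΔ
        have h2 : diam (φ j '' (phiWord φ W '' K)) ≤ 2 := by
          rw [← hWcons]; exact hdiamW (j :: W)
        nlinarith [hc]
  -- main induction on k
  have main : ∀ (k : ℕ) (I J : List (Fin N)), I.length = k → J.length = k →
      (phiWord φ I '' K) ∩ (phiWord φ J '' K) = ∅ →
      ∀ a ∈ phiWord φ I '' K, ∀ b ∈ phiWord φ J '' K,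
        c/4 * min (diam (phiWord φ I '' K)) (diam (phiWord φ J '' K)) ≤ dist a b := by
    intro k
    induction k with
    | zero =>
      intro I J hI hJ hdisj
      rw [List.length_eq_zero_iff] at hI hJ
      subst hI; subst hJ
      exfalso
      simp only [phiWord, Set.image_id, Set.inter_self] at hdisj
      exact (Set.nonempty_iff_ne_empty.1 ⟨xK, hxK⟩) hdisj
    | succ n ih =>
      intro I J hI hJ hdisj a ha b hb
      obtain ⟨i, I', rfl⟩ : ∃ i I'', I = i :: I'' := by
        cases I with
        | nil => simp at hI
        | cons i I'' => exact ⟨i, I'', rfl⟩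
      obtain ⟨j, J', rfl⟩ : ∃ j J'', J = j :: J'' := by
        cases J with
        | nil => simp at hJ
        | cons j J'' => exact ⟨j, J'', rfl⟩
      have hI' : I'.length = n := by simpa using hI
      have hJ' : J'.length = n := by simpa using hJ
      rw [hWcons i I'] at ha hdisj ⊢
      rw [hWcons j J'] at hb hdisj ⊢
      obtain ⟨a', ha', rfl⟩ := ha
      obtain ⟨b', hb', rfl⟩ := hb
      by_cases hij : i = j
      · subst hij
        have hsets : (phiWord φ I' '' K) ∩ (phiWord φ J' '' K) = ∅ := by
          rw [← Set.image_inter (hinj i)] at hdisj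
          exact Set.image_eq_empty.1 hdisj
        have step := ih I' J' hI' hJ' hsets a' ha' b' hb'
        rw [hdiamj, hdiamj, hdistj]
        rcases le_total (diam (phiWord φ I' '' K)) (diam (phiWord φ J' '' K)) with h | h
        · rw [min_eq_left (mul_le_mul_of_nonneg_left h (hr i).1.le)]
          rw [min_eq_left h] at step
          linarith [mul_le_mul_of_nonneg_left step (hr i).1.le]
        · rw [min_eq_right (mul_le_mul_of_nonneg_left h (hr i).1.le)]
          rw [min_eq_right h] at step
          linarith [mul_le_mul_of_nonneg_left step (hr i).1.le]
      · have haΔ' : a' ∈ Δ := hWK I' ha'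
        have hbΔ' : b' ∈ Δ := hWK J' hb'
        have haT : φ i a' ∈ φ i '' Δ := ⟨a', haΔ', rfl⟩
        have hbT : φ j b' ∈ φ j '' Δ := ⟨b', hbΔ', rfl⟩
        have hD1le : diam (φ i '' (phiWord φ I' '' K)) ≤ 2 := by
          rw [← hWcons]; exact hdiamW (i :: I')
        by_cases hcap : (φ i '' Δ) ∩ (φ j '' Δ) = ∅
        · have h1 := hcS i j hcap _ haT _ hbT
          have hminle : min (diam (φ i '' (phiWord φ I' '' K)))
              (diam (φ j '' (phiWord φ J' '' K))) ≤ 2 := le_trans (min_le_left _ _) hD1le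
          nlinarith [hc]
        · obtain ⟨v, hv⟩ := Set.nonempty_iff_ne_empty.2 hcap
          have hvV := hvert i j hij hv
          obtain ⟨u₁, hu₁V, hu₁⟩ := hvV.1
          obtain ⟨u₂, hu₂V, hu₂⟩ := hvV.2
          have hu12 : u₁ ≠ u₂ := by
            rintro rfl
            exact huniq i j hij u₁ hu₁V (hu₁.trans hu₂.symm)
          have hav : φ i a' - v = r i • (a' - u₁) := by rw [← hu₁, hsubvec]
          have hbv : φ j b' - v = r j • (b' - u₂) := by rw [← hu₂, hsubvec]
          obtain ⟨ax1, ax2, ax3⟩ : 0 ≤ a' 1 ∧ a' 1 ≤ Real.sqrt 3 * a' 0 ∧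
              a' 1 ≤ Real.sqrt 3 * (1 - a' 0) := by rw [hΔ] at haΔ'; exact haΔ'
          obtain ⟨bx1, bx2, bx3⟩ : 0 ≤ b' 1 ∧ b' 1 ≤ Real.sqrt 3 * b' 0 ∧
              b' 1 ≤ Real.sqrt 3 * (1 - b' 0) := by rw [hΔ] at hbΔ'; exact hbΔ'
          have hinner : ⟪φ i a' - v, φ j b' - v⟫ ≤ 1/2 * (‖φ i a' - v‖ * ‖φ j b' - v‖) := by
            rw [hav, hbv, real_inner_smul_left, real_inner_smul_right, norm_smul, norm_smul,
              Real.norm_eq_abs, Real.norm_eq_abs, abs_of_pos (hr i).1, abs_of_pos (hr j).1]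
            have hcm := cone_main a' b' u₁ u₂ ax1 ax2 ax3 bx1 bx2 bx3
              (hVmem u₁ hu₁V) (hVmem u₂ hu₂V) hu12
            have hmul := mul_le_mul_of_nonneg_left hcm (mul_nonneg (hr i).1.le (hr j).1.le)
            nlinarith [hmul]
          have hid : φ i a' - φ j b' = (φ i a' - v) - (φ j b' - v) := by module
          have hsq : ‖φ i a' - v‖^2 - ‖φ i a' - v‖ * ‖φ j b' - v‖ + ‖φ j b' - v‖^2
              ≤ dist (φ i a') (φ j b') ^ 2 := by
            have hexp := norm_sub_sq_real (φ i a' - v) (φ j b' - v)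
            rw [dist_eq_norm, hid]
            linarith [hinner, hexp]
          have hlow1 : ‖φ i a' - v‖/2 ≤ dist (φ i a') (φ j b') := by
            nlinarith [hsq, dist_nonneg (x := φ i a') (y := φ j b'),
              norm_nonneg (φ i a' - v), norm_nonneg (φ j b' - v),
              sq_nonneg (‖φ j b' - v‖ - ‖φ i a' - v‖/2)]
          have hlow2 : ‖φ j b' - v‖/2 ≤ dist (φ i a') (φ j b') := by
            nlinarith [hsq, dist_nonneg (x := φ i a') (y := φ j b'),
              norm_nonneg (φ i a' - v), norm_nonneg (φ j b' - v),
              sq_nonneg (‖φ i a' - v‖ - ‖φ j b' - v‖/2)]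
          have hvcases : v ∉ φ i '' (phiWord φ I' '' K) ∨ v ∉ φ j '' (phiWord φ J' '' K) := by
            by_contra hcon
            push_neg at hcon
            have hmem : v ∈ (φ i '' (phiWord φ I' '' K)) ∩ (φ j '' (phiWord φ J' '' K)) :=
              ⟨hcon.1, hcon.2⟩
            rw [hdisj] at hmem
            exact hmem
          rcases hvcases with hnv | hnv
          · have hu₁not : u₁ ∉ phiWord φ I' '' K := fun hmem => hnv ⟨u₁, hmem, hu₁⟩
            have hL1 := hL I' u₁ hu₁V hu₁not a' ha'
            have hnormval : ‖φ i a' - v‖ = r i * dist a' u₁ := by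
              rw [hav, norm_smul, Real.norm_eq_abs, abs_of_pos (hr i).1, ← dist_eq_norm]
            have hdiameq : diam (φ i '' (phiWord φ I' '' K)) = r i * diam (phiWord φ I' '' K) :=
              hdiamj i _
            have hminle : min (diam (φ i '' (phiWord φ I' '' K)))
                (diam (φ j '' (phiWord φ J' '' K))) ≤ diam (φ i '' (phiWord φ I' '' K)) :=
              min_le_left _ _
            have hmul := mul_le_mul_of_nonneg_left hL1 (hr i).1.le
            have hone : c/4 * min (diam (φ i '' (phiWord φ I' '' K)))
                (diam (φ j '' (phiWord φ J' '' K))) ≤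
                c/4 * diam (φ i '' (phiWord φ I' '' K)) :=
              mul_le_mul_of_nonneg_left hminle (by positivity)
            rw [hdiameq] at hone ⊢
            linarith [hone, hmul, hnormval, hlow1]
          · have hu₂not : u₂ ∉ phiWord φ J' '' K := fun hmem => hnv ⟨u₂, hmem, hu₂⟩
            have hL2 := hL J' u₂ hu₂V hu₂not b' hb'
            have hnormval : ‖φ j b' - v‖ = r j * dist b' u₂ := by
              rw [hbv, norm_smul, Real.norm_eq_abs, abs_of_pos (hr j).1, ← dist_eq_norm]
            have hdiameq : diam (φ j '' (phiWord φ J' '' K)) = r j * diam (phiWord φ J' '' K) :=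
              hdiamj j _
            have hminle : min (diam (φ i '' (phiWord φ I' '' K)))
                (diam (φ j '' (phiWord φ J' '' K))) ≤ diam (φ j '' (phiWord φ J' '' K)) :=
              min_le_right _ _
            have hmul := mul_le_mul_of_nonneg_left hL2 (hr j).1.le
            have hone : c/4 * min (diam (φ i '' (phiWord φ I' '' K)))
                (diam (φ j '' (phiWord φ J' '' K))) ≤
                c/4 * diam (φ j '' (phiWord φ J' '' K)) :=
              mul_le_mul_of_nonneg_left hminle (by positivity)
            rw [hdiameq] at hone ⊢
            linarith [hone, hmul, hnormval, hlow2]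
  exact ⟨c/4, by positivity, fun k _ => main k⟩
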